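/- arXiv:2312.06626 — 2 statements merged into one kernel-verified Lean document; each statement's English description precedes it below -/
import Mathlib

section
/- Let T be a first-order theory and S a set of closed terms such that for every atomic formula φ and every substitution of terms from S for all its free variables, the resulting sentence φ̄ satisfies T ⊢ φ̄ or T ⊢ ¬φ̄. Then the theory of all sentences derivable from T using the usual first-order rules together with the S-rule is complete: for every sentence σ, T ⊢_S σ or T ⊢_S ¬σ. -/
open FirstOrder FirstOrder.Language Cardinal Set

universe u v w w2

/-- The universal closure `∀x φ(x)` of a formula in one free variable. -/
noncomputable def allClose {L : Language} (φ : L.Formula Unit) : L.Sentence :=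
  Formula.iAlls Unit (φ.relabel (fun _ : Unit => (Sum.inr () : Empty ⊕ Unit)))

/-- The existential closure `∃x φ(x)` of a formula in one free variable. -/
noncomputable def exClose {L : Language} (φ : L.Formula Unit) : L.Sentence :=
  Formula.iExs Unit (φ.relabel (fun _ : Unit => (Sum.inr () : Empty ⊕ Unit)))

/-- Substitution of a closed term for the unique free variable. -/
noncomputable def substC {L : Language} (φ : L.Formula Unit) (t : L.Term Empty) : L.Sentence :=
  φ.subst (fun _ => t)


/-- Provability generated by first-order provability (rendered, by Gödel completeness, as
semantic consequence `⊨ᵇ`) together with the `S`-rule. -/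
inductive SProv (L : Language) (S : Set (L.Term Empty)) (T : L.Theory) : L.Sentence → Prop
  | ax {σ} (h : σ ∈ T) : SProv L S T σ
  | fo (T' : L.Theory) (h : ∀ σ ∈ T', SProv L S T σ) {σ} (hσ : T' ⊨ᵇ σ) : SProv L S T σ
  | srule (φ : L.Formula Unit) (h : ∀ t ∈ S, SProv L S T (substC φ t)) :
      SProv L S T (allClose φ)

namespace SAux

variable {L : FirstOrder.Language.{u, v}}

lemma sentR {M : Type*} [L.Structure M] (σ : L.Sentence) :
    (M ⊨ σ) ↔ Formula.Realize σ (default : Empty → M) := Iff.rfl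

lemma frealize_subst {α β : Type*} {M : Type*} [L.Structure M] {φ : L.Formula α}
    {tf : α → L.Term β} {v : β → M} :
    Formula.Realize (φ.subst tf) v ↔ Formula.Realize φ (fun a => (tf a).realize v) :=
  BoundedFormula.realize_subst

lemma realize_iff_of_eq {α : Type*} {M : Type*} [L.Structure M] {n : ℕ}
    (φ : L.BoundedFormula α n) {v₁ v₂ : α → M} {xs₁ xs₂ : Fin n → M}
    (h1 : v₁ = v₂) (h2 : xs₁ = xs₂) : φ.Realize v₁ xs₁ ↔ φ.Realize v₂ xs₂ := by
  rw [h1, h2]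

/-- Substituting closed terms for all the (de Bruijn) variables of a bounded formula
without free variables. -/
noncomputable def inst {n : ℕ} (φ : L.BoundedFormula Empty n)
    (f : Fin n → L.Term Empty) : L.Sentence :=
  φ.toFormula.subst (Sum.elim (fun e => e.elim) f)

lemma realize_inst {M : Type*} [L.Structure M] {n : ℕ} (φ : L.BoundedFormula Empty n)
    (f : Fin n → L.Term Empty) (v : Empty → M) :
    Formula.Realize (inst φ f) v ↔ φ.Realize v (fun i => (f i).realize v) := by
  rw [inst, frealize_subst, BoundedFormula.realize_toFormula]
  refine realize_iff_of_eq φ (Subsingleton.elim _ _) ?_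
  funext i
  simp

/-- The result of substituting closed terms for all but the last variable,
leaving the last one free (named by `Unit`). -/
noncomputable def oneVar {n : ℕ} (ψ : L.BoundedFormula Empty (n + 1))
    (f : Fin n → L.Term Empty) : L.Formula Unit :=
  ψ.toFormula.subst (Sum.elim (fun e => e.elim)
    (Fin.snoc (fun i => (f i).relabel (fun e => e.elim)) (Term.var ())))

lemma realize_oneVar {M : Type*} [L.Structure M] {n : ℕ} (ψ : L.BoundedFormula Empty (n + 1))
    (f : Fin n → L.Term Empty) (w : Unit → M) (v : Empty → M) :
    Formula.Realize (oneVar ψ f) w ↔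
      ψ.Realize v (Fin.snoc (fun i => (f i).realize v) (w ())) := by
  rw [oneVar, frealize_subst, BoundedFormula.realize_toFormula]
  refine realize_iff_of_eq ψ (Subsingleton.elim _ _) ?_
  funext i
  refine Fin.lastCases ?_ (fun j => ?_) i
  · simp
  · simp only [Function.comp_apply, Sum.elim_inr, Fin.snoc_castSucc, Term.realize_relabel]
    congr 1
    exact Subsingleton.elim _ _

lemma realize_substC_oneVar {M : Type*} [L.Structure M] {n : ℕ}
    (ψ : L.BoundedFormula Empty (n + 1)) (f : Fin n → L.Term Empty) (t : L.Term Empty)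
    (v : Empty → M) :
    Formula.Realize (substC (oneVar ψ f) t) v ↔
      ψ.Realize v (Fin.snoc (fun i => (f i).realize v) (t.realize v)) := by
  rw [substC, frealize_subst]
  exact realize_oneVar ψ f _ v

lemma realize_allClose_oneVar {M : Type*} [L.Structure M] {n : ℕ}
    (ψ : L.BoundedFormula Empty (n + 1)) (f : Fin n → L.Term Empty) (v : Empty → M) :
    Formula.Realize (allClose (oneVar ψ f)) v ↔
      ∀ x : M, ψ.Realize v (Fin.snoc (fun i => (f i).realize v) x) := by
  rw [allClose, Formula.realize_iAlls]
  simp only [Formula.realize_relabel]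
  constructor
  · intro h x
    have := h (fun _ => x)
    change Formula.Realize (oneVar ψ f) (fun _ : Unit => x) at this
    rw [realize_oneVar ψ f _ v] at this
    exact this
  · intro h i
    change Formula.Realize (oneVar ψ f) (fun _ : Unit => i ())
    rw [realize_oneVar ψ f _ v]
    exact h _

lemma realize_inst_snoc {M : Type*} [L.Structure M] {n : ℕ}
    (ψ : L.BoundedFormula Empty (n + 1)) (f : Fin n → L.Term Empty) (t : L.Term Empty)
    (v : Empty → M) :
    Formula.Realize (inst ψ (Fin.snoc f t)) v ↔
      ψ.Realize v (Fin.snoc (fun i => (f i).realize v) (t.realize v)) := by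
  rw [realize_inst]
  refine realize_iff_of_eq ψ rfl ?_
  funext i
  refine Fin.lastCases ?_ (fun j => ?_) i <;> simp

lemma realize_inst_all {M : Type*} [L.Structure M] {n : ℕ}
    (ψ : L.BoundedFormula Empty (n + 1)) (f : Fin n → L.Term Empty) (v : Empty → M) :
    Formula.Realize (inst ψ.all f) v ↔
      ∀ x : M, ψ.Realize v (Fin.snoc (fun i => (f i).realize v) x) := by
  rw [realize_inst, BoundedFormula.realize_all]

variable {S : Set (L.Term Empty)} {T : L.Theory}

lemma sprov_of_models {σ : L.Sentence} (h : T ⊨ᵇ σ) : SProv L S T σ :=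
  SProv.fo T (fun _ hτ => SProv.ax hτ) h

lemma models1 {σ₁ σ : L.Sentence}
    (h : ∀ (M : Type (max u v)) [L.Structure M] [Nonempty M],
      M ⊨ σ₁ → M ⊨ σ) :
    ({σ₁} : L.Theory) ⊨ᵇ σ := by
  rw [Theory.models_sentence_iff]
  intro M
  exact h M (Theory.realize_sentence_of_mem _ (Set.mem_singleton _))

lemma models2 {σ₁ σ₂ σ : L.Sentence}
    (h : ∀ (M : Type (max u v)) [L.Structure M] [Nonempty M],
      M ⊨ σ₁ → M ⊨ σ₂ → M ⊨ σ) :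
    ({σ₁, σ₂} : L.Theory) ⊨ᵇ σ := by
  rw [Theory.models_sentence_iff]
  intro M
  exact h M (Theory.realize_sentence_of_mem ({σ₁, σ₂} : L.Theory) (Set.mem_insert _ _))
    (Theory.realize_sentence_of_mem ({σ₁, σ₂} : L.Theory)
      (Set.mem_insert_of_mem _ (Set.mem_singleton _)))

lemma sprov_sem1 {σ₁ σ : L.Sentence} (h1 : SProv L S T σ₁)
    (h : ∀ (M : Type (max u v)) [L.Structure M] [Nonempty M],
      M ⊨ σ₁ → M ⊨ σ) : SProv L S T σ :=
  SProv.fo {σ₁} (fun τ hτ => by rw [Set.mem_singleton_iff] at hτ; subst hτ; exact h1)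
    (models1 h)

lemma sprov_sem2 {σ₁ σ₂ σ : L.Sentence} (h1 : SProv L S T σ₁) (h2 : SProv L S T σ₂)
    (h : ∀ (M : Type (max u v)) [L.Structure M] [Nonempty M],
      M ⊨ σ₁ → M ⊨ σ₂ → M ⊨ σ) : SProv L S T σ :=
  SProv.fo {σ₁, σ₂} (fun τ hτ => by
      rcases hτ with hτ | hτ
      · subst hτ; exact h1
      · rw [Set.mem_singleton_iff] at hτ; subst hτ; exact h2)
    (models2 h)

lemma models_transfer {σ' σ : L.Sentence} (h : T ⊨ᵇ σ')
    (e : ∀ (M : Type (max u v)) [L.Structure M] [Nonempty M], M ⊨ σ' → M ⊨ σ) :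
    T ⊨ᵇ σ := by
  rw [Theory.models_sentence_iff] at h ⊢
  intro M
  exact e M (h M)

lemma main
    (hatom : ∀ (n : ℕ) (φ : L.Formula (Fin n)), φ.IsAtomic →
      ∀ f : Fin n → L.Term Empty, (∀ i, f i ∈ S) →
        T ⊨ᵇ φ.subst f ∨ T ⊨ᵇ (φ.subst f).not) :
    ∀ {n : ℕ} (φ : L.BoundedFormula Empty n) (f : Fin n → L.Term Empty),
      (∀ i, f i ∈ S) →
      SProv L S T (inst φ f) ∨ SProv L S T (inst φ f).not := by
  intro n φ
  induction φ with
  | falsum =>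
    intro f hf
    right
    refine sprov_of_models (Theory.models_sentence_iff.2 fun M => ?_)
    rw [sentR, Formula.realize_not, realize_inst]
    exact fun h => h
  | equal t₁ t₂ =>
    intro f hf
    have hAeq : ∀ (M : Type (max u v)) [L.Structure M] [Nonempty M],
        M ⊨ (BoundedFormula.equal (t₁.relabel (fun x : Empty ⊕ Fin _ =>
              Sum.inl (Sum.elim (fun e => e.elim) id x)))
            (t₂.relabel (fun x => Sum.inl (Sum.elim (fun e => e.elim) id x))) :
              L.Formula (Fin _)).subst f ↔
          M ⊨ inst (BoundedFormula.equal t₁ t₂) f := by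
      intro M _ _
      rw [sentR, sentR, realize_inst, frealize_subst]
      refine Iff.trans (BoundedFormula.realize_bdEqual _ _)
        (Iff.trans ?_ (BoundedFormula.realize_bdEqual t₁ t₂).symm)
      have hv : (Sum.elim (fun a => Term.realize (default : Empty → M) (f a))
            (default : Fin 0 → M)) ∘
          (fun x : Empty ⊕ Fin _ => Sum.inl (Sum.elim (fun e => e.elim) id x)) =
          Sum.elim (default : Empty → M)
            (fun i => Term.realize (default : Empty → M) (f i)) := by
        funext x
        rcases x with e | i
        · exact e.elim
        · simp
      rw [Term.realize_relabel, Term.realize_relabel, hv]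
    rcases hatom _ _ (BoundedFormula.IsAtomic.equal _ _) f hf with h | h
    · left
      exact sprov_of_models (models_transfer h (fun M _ _ hm => (hAeq M).1 hm))
    · right
      refine sprov_of_models (models_transfer h (fun M _ _ hm => ?_))
      rw [Sentence.realize_not] at hm ⊢
      exact fun hc => hm ((hAeq M).2 hc)
  | rel R ts =>
    intro f hf
    have hAeq : ∀ (M : Type (max u v)) [L.Structure M] [Nonempty M],
        M ⊨ (BoundedFormula.rel R (fun i => (ts i).relabel (fun x : Empty ⊕ Fin _ =>
              Sum.inl (Sum.elim (fun e => e.elim) id x))) : L.Formula (Fin _)).subst f ↔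
          M ⊨ inst (BoundedFormula.rel R ts) f := by
      intro M _ _
      rw [sentR, sentR, realize_inst, frealize_subst]
      refine Iff.trans BoundedFormula.realize_rel (Iff.trans ?_ BoundedFormula.realize_rel.symm)
      have hv : (Sum.elim (fun a => Term.realize (default : Empty → M) (f a))
            (default : Fin 0 → M)) ∘
          (fun x : Empty ⊕ Fin _ => Sum.inl (Sum.elim (fun e => e.elim) id x)) =
          Sum.elim (default : Empty → M)
            (fun i => Term.realize (default : Empty → M) (f i)) := by
        funext x
        rcases x with e | i
        · exact e.elim
        · simp
      refine iff_of_eq (congrArg _ ?_)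
      funext i
      rw [Term.realize_relabel, hv]
    rcases hatom _ _ (BoundedFormula.IsAtomic.rel _ _) f hf with h | h
    · left
      exact sprov_of_models (models_transfer h (fun M _ _ hm => (hAeq M).1 hm))
    · right
      refine sprov_of_models (models_transfer h (fun M _ _ hm => ?_))
      rw [Sentence.realize_not] at hm ⊢
      exact fun hc => hm ((hAeq M).2 hc)
  | imp φ₁ φ₂ ih₁ ih₂ =>
    intro f hf
    have himp : ∀ (M : Type (max u v)) [L.Structure M] [Nonempty M],
        M ⊨ inst (φ₁.imp φ₂) f ↔ (M ⊨ inst φ₁ f → M ⊨ inst φ₂ f) := by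
      intro M _ _
      rw [sentR, sentR, sentR, realize_inst, realize_inst, realize_inst,
        BoundedFormula.realize_imp]
    rcases ih₂ f hf with h2 | h2
    · left
      exact sprov_sem1 h2 (fun M _ _ hm => (himp M).2 fun _ => hm)
    · rcases ih₁ f hf with h1 | h1
      · right
        refine sprov_sem2 h1 h2 (fun M _ _ hm1 hm2 => ?_)
        rw [Sentence.realize_not] at hm2 ⊢
        exact fun hc => hm2 ((himp M).1 hc hm1)
      · left
        refine sprov_sem1 h1 (fun M _ _ hm => (himp M).2 fun hc => ?_)
        rw [Sentence.realize_not] at hm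
        exact absurd hc hm
  | all ψ ih =>
    intro f hf
    by_cases hex : ∃ t ∈ S, SProv L S T (inst ψ (Fin.snoc f t)).not
    · right
      obtain ⟨t, ht, hp⟩ := hex
      refine sprov_sem1 hp (fun M _ _ hm => ?_)
      rw [Sentence.realize_not] at hm ⊢
      rw [sentR, realize_inst_snoc] at hm
      rw [sentR, realize_inst_all]
      exact fun hc => hm (hc _)
    · left
      have hall : ∀ t ∈ S, SProv L S T (inst ψ (Fin.snoc f t)) := by
        intro t ht
        rcases ih (Fin.snoc f t) (fun i => by
          refine Fin.lastCases ?_ (fun j => ?_) i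
          · simpa using ht
          · simpa using hf j) with h | h
        · exact h
        · exact absurd ⟨t, ht, h⟩ hex
      have hA : SProv L S T (allClose (oneVar ψ f)) := by
        refine SProv.srule _ (fun t ht => ?_)
        refine sprov_sem1 (hall t ht) (fun M _ _ hm => ?_)
        rw [sentR, realize_inst_snoc] at hm
        rw [sentR, realize_substC_oneVar]
        exact hm
      refine sprov_sem1 hA (fun M _ _ hm => ?_)
      rw [sentR, realize_allClose_oneVar] at hm
      rw [sentR, realize_inst_all]
      exact hm

end SAux

/-- Syntactic completeness: if T decides all substitution instances (by terms of S)
of atomic formulas, then the theory [T, ⊢_S] is complete. -/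
theorem stmt_3 {L : FirstOrder.Language.{u, v}} (T : L.Theory) (S : Set (L.Term Empty))
    (hatom : ∀ (n : ℕ) (φ : L.Formula (Fin n)), φ.IsAtomic →
      ∀ f : Fin n → L.Term Empty, (∀ i, f i ∈ S) →
        T ⊨ᵇ φ.subst f ∨ T ⊨ᵇ (φ.subst f).not) :
    ∀ σ : L.Sentence, SProv L S T σ ∨ SProv L S T σ.not := by
  intro σ
  have key : ∀ (M : Type (max u v)) [L.Structure M] [Nonempty M],
      M ⊨ SAux.inst σ (fun i => i.elim0) ↔ M ⊨ σ := by
    intro M _ _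
    rw [SAux.sentR, SAux.sentR, SAux.realize_inst]
    exact SAux.realize_iff_of_eq σ rfl (Subsingleton.elim _ _)
  rcases SAux.main hatom σ (fun i => i.elim0) (fun i => i.elim0) with h | h
  · left
    exact SAux.sprov_sem1 h (fun M _ _ hm => (key M).1 hm)
  · right
    refine SAux.sprov_sem1 h (fun M _ _ hm => ?_)
    rw [Sentence.realize_not] at hm ⊢
    exact fun hc => hm ((key M).2 hc)
end

section
/- Let T be a theory, Θ a set of uniqueness formulas in (T,⊢), and suppose that for every atomic formula φ(x₀,…,xₙ) and all θ₀,…,θₙ ∈ Θ, T decides the sentence ∃x₀…∃xₙ (φ(x₀,…,xₙ) ∧ θ₀(x₀) ∧ … ∧ θₙ(xₙ)) (i.e., proves it or its negation). Then the theory [T, ⊢_Θ] of sentences derivable from T with the Θ-rule is complete. -/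
open FirstOrder FirstOrder.Language Cardinal Set

universe u v w w2

/-- The sentence `∃x (θ(x) ∧ ∀y (θ(y) → x = y))`. -/
noncomputable def uniqSentence {L : Language} (θ : L.Formula Unit) : L.Sentence :=
  exClose (θ ⊓ Formula.iAlls Unit (Formula.relabel (id : Unit ⊕ Unit → Unit ⊕ Unit)
    ((θ.relabel Sum.inr).imp (Term.equal (Term.var (Sum.inl ())) (Term.var (Sum.inr ()))))))

/-- `θ` is a uniqueness formula in `(T, ⊢)`. -/
def IsUniquenessFormula {L : Language} (T : L.Theory) (θ : L.Formula Unit) : Prop :=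
  T ⊨ᵇ uniqSentence θ


/-- The `Θ`-atomic-style closure `∃x₀…∃xₙ (φ(x₀,…,xₙ) ∧ θ₀(x₀) ∧ … ∧ θₙ(xₙ))`. -/
noncomputable def thetaClose {L : Language} {n : ℕ} (φ : L.Formula (Fin n))
    (θs : Fin n → L.Formula Unit) : L.Sentence :=
  Formula.iExs (Fin n) (Formula.relabel (Sum.inr : Fin n → Empty ⊕ Fin n)
    (φ ⊓ (List.ofFn fun i => (θs i).relabel fun _ => i).foldr (· ⊓ ·) ⊤))


/-- Provability generated by first-order provability together with the `Θ`-rule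
(with premises `∃x (φ(x) ∧ θ(x))`). -/
inductive ThetaProv (L : Language) (Θ : Set (L.Formula Unit)) (T : L.Theory) : L.Sentence → Prop
  | ax {σ} (h : σ ∈ T) : ThetaProv L Θ T σ
  | fo (T' : L.Theory) (h : ∀ σ ∈ T', ThetaProv L Θ T σ) {σ} (hσ : T' ⊨ᵇ σ) : ThetaProv L Θ T σ
  | rule (φ : L.Formula Unit) (h : ∀ θ ∈ Θ, ThetaProv L Θ T (exClose (φ ⊓ θ))) :
      ThetaProv L Θ T (allClose φ)

namespace StmtAux

open FirstOrder FirstOrder.Language FirstOrder.Language.BoundedFormula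

universe x

section Realize

variable {L : FirstOrder.Language.{u, v}} {M : Type x} [L.Structure M]

lemma realize_exClose {φ : L.Formula Unit} :
    M ⊨ exClose φ ↔ ∃ a : M, φ.Realize (fun _ : Unit => a) := by
  rw [exClose, Sentence.Realize, Formula.realize_iExs]
  simp only [Formula.realize_relabel]
  constructor
  · rintro ⟨i, h⟩; exact ⟨i (), h⟩
  · rintro ⟨a, h⟩; exact ⟨fun _ => a, h⟩

lemma realize_allClose {φ : L.Formula Unit} :
    M ⊨ allClose φ ↔ ∀ a : M, φ.Realize (fun _ : Unit => a) := by
  rw [allClose, Sentence.Realize, Formula.realize_iAlls]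
  simp only [Formula.realize_relabel]
  constructor
  · intro h a; exact h (fun _ => a)
  · intro h i; exact h (i ())

lemma realize_uniqSentence {θ : L.Formula Unit} :
    M ⊨ uniqSentence θ ↔
      ∃ a : M, θ.Realize (fun _ : Unit => a) ∧
        ∀ b : M, θ.Realize (fun _ : Unit => b) → a = b := by
  rw [uniqSentence, realize_exClose]
  refine exists_congr fun a => ?_
  rw [Formula.realize_inf]
  refine and_congr Iff.rfl ?_
  rw [Formula.realize_iAlls]
  simp only [Formula.realize_relabel]
  constructor
  · intro h b hb
    have h1 := h (fun _ => b)
    rw [Formula.realize_imp] at h1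
    have h2 := h1 (by rw [Formula.realize_relabel]; exact hb)
    rw [Formula.realize_equal] at h2
    exact h2
  · intro h i
    rw [Formula.realize_imp]
    intro hb
    rw [Formula.realize_relabel] at hb
    rw [Formula.realize_equal]
    exact h (i ()) hb

lemma realize_ofFn_foldr_inf {n : ℕ} {β : Type*} (χ : Fin n → L.Formula β) (v : β → M) :
    (((List.ofFn χ).foldr (· ⊓ ·) ⊤ : L.Formula β).Realize v) ↔ ∀ i, (χ i).Realize v := by
  rw [Formula.Realize, BoundedFormula.realize_foldr_inf]
  constructor
  · intro h i
    exact h (χ i) (by simp [List.mem_ofFn])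
  · intro h φ hφ
    rw [List.mem_ofFn] at hφ
    obtain ⟨i, rfl⟩ := hφ
    exact h i

lemma realize_thetaClose {n : ℕ} {φ : L.Formula (Fin n)} {θs : Fin n → L.Formula Unit} :
    M ⊨ thetaClose φ θs ↔
      ∃ xs : Fin n → M, φ.Realize xs ∧ ∀ i, (θs i).Realize (fun _ : Unit => xs i) := by
  rw [thetaClose, Sentence.Realize, Formula.realize_iExs]
  refine exists_congr fun xs => ?_
  rw [Formula.realize_relabel]
  rw [Formula.realize_inf]
  refine and_congr Iff.rfl ?_
  rw [realize_ofFn_foldr_inf]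
  refine forall_congr' fun i => ?_
  rw [Formula.realize_relabel]
  exact Iff.rfl

lemma realize_thetaClose_of_unique {n : ℕ} {φ : L.Formula (Fin n)}
    {θs : Fin n → L.Formula Unit} {w : Fin n → M}
    (hw : ∀ i, (θs i).Realize (fun _ : Unit => w i))
    (hu : ∀ i (y : M), (θs i).Realize (fun _ : Unit => y) → y = w i) :
    M ⊨ thetaClose φ θs ↔ φ.Realize w := by
  rw [realize_thetaClose]
  constructor
  · rintro ⟨xs, hφ, hx⟩
    have hxw : xs = w := funext fun i => hu i _ (hx i)
    rwa [hxw] at hφ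
  · exact fun h => ⟨w, h, hw⟩

end Realize

/-- Flattening of a bounded formula over `Empty` into a formula over `Fin m`. -/
noncomputable def flat {L : FirstOrder.Language.{u, v}} {m : ℕ}
    (ψ : L.BoundedFormula Empty m) : L.Formula (Fin m) :=
  ψ.toFormula.relabel (Sum.elim (fun e => e.elim) id)

section Flat

variable {L : FirstOrder.Language.{u, v}} {M : Type x} [L.Structure M]

lemma realize_flat {m : ℕ} {ψ : L.BoundedFormula Empty m} {v : Fin m → M} :
    (flat ψ).Realize v ↔ ψ.Realize (fun e => e.elim) v := by
  rw [flat, Formula.realize_relabel, BoundedFormula.realize_toFormula]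
  have h1 : ((v ∘ Sum.elim (fun e : Empty => e.elim) id) ∘ Sum.inl)
      = (fun e : Empty => e.elim) := funext fun e => e.elim
  have h2 : ((v ∘ Sum.elim (fun e : Empty => e.elim) id) ∘ Sum.inr) = v := rfl
  rw [h1, h2]

lemma isAtomic_toFormula {α : Type*} {m : ℕ} {ψ : L.BoundedFormula α m}
    (h : ψ.IsAtomic) : ψ.toFormula.IsAtomic := by
  cases h with
  | equal t₁ t₂ => exact BoundedFormula.IsAtomic.equal _ _
  | rel R ts => exact BoundedFormula.IsAtomic.rel _ _

lemma isAtomic_relabelF {α β : Type*} {φ : L.Formula α} (h : φ.IsAtomic) (g : α → β) :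
    (φ.relabel g).IsAtomic :=
  h.relabel _

lemma isAtomic_flat {m : ℕ} {ψ : L.BoundedFormula Empty m} (h : ψ.IsAtomic) :
    (flat ψ).IsAtomic :=
  isAtomic_relabelF (isAtomic_toFormula h) _

end Flat

end StmtAux
namespace StmtAux

open FirstOrder FirstOrder.Language FirstOrder.Language.BoundedFormula

section Prov

variable {L : FirstOrder.Language.{u, v}} {Θ : Set (L.Formula Unit)} {T : L.Theory}

/-- The theory of `Θ`-provable sentences. -/
def TSet (Θ : Set (L.Formula Unit)) (T : L.Theory) : L.Theory := {σ | ThetaProv L Θ T σ}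

lemma prv_of_sem {σ : L.Sentence}
    (h : ∀ (M : Type (max u v)) [L.Structure M] [Nonempty M], M ⊨ TSet Θ T → M ⊨ σ) :
    ThetaProv L Θ T σ := by
  refine ThetaProv.fo (TSet Θ T) (fun _ h => h) ?_
  intro M v xs
  have hv : v = default := funext fun e => e.elim
  have hxs : xs = default := funext fun i => i.elim0
  rw [hv, hxs]
  exact h M M.is_model

lemma sem_of_prv {σ : L.Sentence} (h : ThetaProv L Θ T σ) (M : Type*) [L.Structure M]
    [Nonempty M] (hM : M ⊨ TSet Θ T) : M ⊨ σ := by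
  haveI := hM
  exact (TSet Θ T).realize_sentence_of_mem h

lemma model_T (M : Type*) [L.Structure M] (hM : M ⊨ TSet Θ T) : M ⊨ T :=
  hM.mono fun _σ hσ => ThetaProv.ax hσ

lemma exists_wits (hΘ : ∀ θ ∈ Θ, IsUniquenessFormula T θ) (M : Type*) [L.Structure M]
    [Nonempty M] [M ⊨ T] {n : ℕ} {θs : Fin n → L.Formula Unit} (hθs : ∀ i, θs i ∈ Θ) :
    ∃ w : Fin n → M, (∀ i, (θs i).Realize (fun _ : Unit => w i)) ∧
      ∀ i (y : M), (θs i).Realize (fun _ : Unit => y) → y = w i := by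
  have h : ∀ i : Fin n, ∃ a : M, (θs i).Realize (fun _ : Unit => a) ∧
      ∀ b : M, (θs i).Realize (fun _ : Unit => b) → a = b := fun i =>
    realize_uniqSentence.1
      ((show T ⊨ᵇ uniqSentence (θs i) from hΘ _ (hθs i)).realize_sentence M)
  choose w hw hu using h
  exact ⟨w, hw, fun i y hy => (hu i y hy).symm⟩

end Prov

section Phi0

variable {L : FirstOrder.Language.{u, v}}

/-- The `(k+1)`-st variable sent to the free `Unit` variable, the rest to themselves. -/
def lastToUnit (k : ℕ) : Fin (k + 1) → Unit ⊕ Fin k := fun i =>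
  Fin.lastCases (Sum.inl ()) (fun j => Sum.inr j) i

/-- `φ0 χ θs` is the formula `∃ x₀ … x_{k-1}, χ(x₀,…,x_{k-1},y) ∧ ⋀ θᵢ(xᵢ)`
in one free variable `y`. -/
noncomputable def phi0 {k : ℕ} (χ : L.BoundedFormula Empty (k + 1))
    (θs : Fin k → L.Formula Unit) : L.Formula Unit :=
  Formula.iExs (Fin k)
    ((flat χ).relabel (lastToUnit k) ⊓
      ((List.ofFn fun j : Fin k =>
        (θs j).relabel fun _ => (Sum.inr j : Unit ⊕ Fin k)).foldr (· ⊓ ·) ⊤))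

lemma realize_phi0 {k : ℕ} {χ : L.BoundedFormula Empty (k + 1)}
    {θs : Fin k → L.Formula Unit} {M : Type x} [L.Structure M] (b : M) :
    (phi0 χ θs).Realize (fun _ : Unit => b) ↔
      ∃ xs : Fin k → M, χ.Realize (fun e => e.elim) (Fin.snoc xs b) ∧
        ∀ j, (θs j).Realize (fun _ : Unit => xs j) := by
  rw [phi0, Formula.realize_iExs]
  refine exists_congr fun xs => ?_
  rw [Formula.realize_inf, Formula.realize_relabel, realize_ofFn_foldr_inf]
  have hc : (Sum.elim (fun _ : Unit => b) xs ∘ lastToUnit k)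
      = Fin.snoc xs b := by
    funext t
    refine Fin.lastCases ?_ ?_ t
    · simp [lastToUnit]
    · intro j
      simp [lastToUnit]
  rw [hc, realize_flat]
  refine and_congr Iff.rfl (forall_congr' fun j => ?_)
  rw [Formula.realize_relabel]
  exact Iff.rfl

end Phi0

end StmtAux
namespace StmtAux

open FirstOrder FirstOrder.Language FirstOrder.Language.BoundedFormula

variable {L : FirstOrder.Language.{u, v}} {Θ : Set (L.Formula Unit)} {T : L.Theory}

/-- Decision for atomic formulas. -/
lemma atomic_decide (hΘ : ∀ θ ∈ Θ, IsUniquenessFormula T θ)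
    (hdec : ∀ (n : ℕ) (φ : L.Formula (Fin (n + 1))), φ.IsAtomic →
      ∀ θs : Fin (n + 1) → L.Formula Unit, (∀ i, θs i ∈ Θ) →
        T ⊨ᵇ thetaClose φ θs ∨ T ⊨ᵇ (thetaClose φ θs).not)
    (θstar : L.Formula Unit) (hθstar : θstar ∈ Θ) {m : ℕ} :
    ∀ (ψ : L.BoundedFormula Empty m), ψ.IsAtomic →
      ∀ θs : Fin m → L.Formula Unit, (∀ i, θs i ∈ Θ) →
        ThetaProv L Θ T (thetaClose (flat ψ) θs) ∨
          ThetaProv L Θ T (thetaClose (flat ψ).not θs) := by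
  cases m with
  | succ k =>
    intro ψ hat θs hθs
    rcases hdec k (flat ψ) (isAtomic_flat hat) θs hθs with hpos | hneg
    · left
      apply prv_of_sem
      intro M _ _ hM
      haveI : M ⊨ T := model_T M hM
      exact hpos.realize_sentence M
    · right
      apply prv_of_sem
      intro M _ _ hM
      haveI : M ⊨ T := model_T M hM
      obtain ⟨w, hw, hu⟩ := exists_wits hΘ M hθs
      have hn : ¬ M ⊨ thetaClose (flat ψ) θs := by
        have h2 := hneg.realize_sentence M
        rwa [Sentence.realize_not] at h2
      rw [realize_thetaClose_of_unique hw hu] at hn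
      rw [realize_thetaClose_of_unique hw hu, Formula.realize_not]
      exact hn
  | zero =>
    intro ψ hat θs hθs
    have hA1 : ((flat ψ).relabel (fun i : Fin 0 => i.elim0) : L.Formula (Fin 1)).IsAtomic :=
      isAtomic_relabelF (isAtomic_flat hat) _
    rcases hdec 0 _ hA1 (fun _ => θstar) (fun _ => hθstar) with hpos | hneg
    · left
      apply prv_of_sem
      intro M _ _ hM
      haveI : M ⊨ T := model_T M hM
      have h1 := hpos.realize_sentence M
      rw [realize_thetaClose] at h1
      obtain ⟨xs, hφ, -⟩ := h1
      rw [Formula.realize_relabel] at hφ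
      rw [realize_thetaClose]
      refine ⟨fun i => i.elim0, ?_, fun i => i.elim0⟩
      have he : (xs ∘ fun i : Fin 0 => i.elim0) = (fun i : Fin 0 => i.elim0) :=
        funext fun i => i.elim0
      rwa [he] at hφ
    · right
      apply prv_of_sem
      intro M _ _ hM
      haveI : M ⊨ T := model_T M hM
      obtain ⟨w, hw, -⟩ := exists_wits hΘ M (θs := fun _ : Fin 1 => θstar) (fun _ => hθstar)
      have hn : ¬ M ⊨ thetaClose
          ((flat ψ).relabel (fun i : Fin 0 => i.elim0) : L.Formula (Fin 1))
          (fun _ => θstar) := by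
        have h2 := hneg.realize_sentence M
        rwa [Sentence.realize_not] at h2
      rw [realize_thetaClose]
      refine ⟨fun i => i.elim0, ?_, fun i => i.elim0⟩
      rw [Formula.realize_not]
      intro hc
      apply hn
      rw [realize_thetaClose]
      refine ⟨fun _ => w 0, ?_, fun i => hw 0⟩
      rw [Formula.realize_relabel]
      have he : ((fun _ : Fin 1 => w 0) ∘ fun i : Fin 0 => i.elim0)
          = (fun i : Fin 0 => i.elim0) := funext fun i => i.elim0
      rwa [he]

/-- Decision for quantifier-free formulas. -/
lemma qf_decide (hΘ : ∀ θ ∈ Θ, IsUniquenessFormula T θ)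
    (hdec : ∀ (n : ℕ) (φ : L.Formula (Fin (n + 1))), φ.IsAtomic →
      ∀ θs : Fin (n + 1) → L.Formula Unit, (∀ i, θs i ∈ Θ) →
        T ⊨ᵇ thetaClose φ θs ∨ T ⊨ᵇ (thetaClose φ θs).not)
    (θstar : L.Formula Unit) (hθstar : θstar ∈ Θ) {m : ℕ}
    {ψ : L.BoundedFormula Empty m} (h : ψ.IsQF) :
    ∀ θs : Fin m → L.Formula Unit, (∀ i, θs i ∈ Θ) →
      ThetaProv L Θ T (thetaClose (flat ψ) θs) ∨
        ThetaProv L Θ T (thetaClose (flat ψ).not θs) := by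
  induction h with
  | falsum =>
    intro θs hθs
    right
    apply prv_of_sem
    intro M _ _ hM
    haveI : M ⊨ T := model_T M hM
    obtain ⟨w, hw, hu⟩ := exists_wits hΘ M hθs
    rw [realize_thetaClose_of_unique hw hu, Formula.realize_not, realize_flat]
    exact fun hc => hc
  | of_isAtomic hat => exact atomic_decide hΘ hdec θstar hθstar _ hat
  | @imp ψ₁ ψ₂ h1 h2 ih1 ih2 =>
    intro θs hθs
    rcases ih1 θs hθs with hp1 | hn1
    · rcases ih2 θs hθs with hp2 | hn2
      · left
        apply prv_of_sem
        intro M _ _ hM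
        haveI : M ⊨ T := model_T M hM
        obtain ⟨w, hw, hu⟩ := exists_wits hΘ M hθs
        have h2 := sem_of_prv hp2 M hM
        rw [realize_thetaClose_of_unique hw hu, realize_flat] at h2
        rw [realize_thetaClose_of_unique hw hu, realize_flat,
          BoundedFormula.realize_imp]
        exact fun _ => h2
      · right
        apply prv_of_sem
        intro M _ _ hM
        haveI : M ⊨ T := model_T M hM
        obtain ⟨w, hw, hu⟩ := exists_wits hΘ M hθs
        have hh1 := sem_of_prv hp1 M hM
        have hh2 := sem_of_prv hn2 M hM
        rw [realize_thetaClose_of_unique hw hu, realize_flat] at hh1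
        rw [realize_thetaClose_of_unique hw hu, Formula.realize_not, realize_flat] at hh2
        rw [realize_thetaClose_of_unique hw hu, Formula.realize_not, realize_flat,
          BoundedFormula.realize_imp]
        exact fun hc => hh2 (hc hh1)
    · left
      apply prv_of_sem
      intro M _ _ hM
      haveI : M ⊨ T := model_T M hM
      obtain ⟨w, hw, hu⟩ := exists_wits hΘ M hθs
      have hh1 := sem_of_prv hn1 M hM
      rw [realize_thetaClose_of_unique hw hu, Formula.realize_not, realize_flat] at hh1
      rw [realize_thetaClose_of_unique hw hu, realize_flat, BoundedFormula.realize_imp]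
      exact fun hc => absurd hc hh1

end StmtAux
namespace StmtAux

open FirstOrder FirstOrder.Language FirstOrder.Language.BoundedFormula

variable {L : FirstOrder.Language.{u, v}} {Θ : Set (L.Formula Unit)} {T : L.Theory}

/-- Decision for prenex formulas. -/
lemma prenex_decide (hΘ : ∀ θ ∈ Θ, IsUniquenessFormula T θ)
    (hdec : ∀ (n : ℕ) (φ : L.Formula (Fin (n + 1))), φ.IsAtomic →
      ∀ θs : Fin (n + 1) → L.Formula Unit, (∀ i, θs i ∈ Θ) →
        T ⊨ᵇ thetaClose φ θs ∨ T ⊨ᵇ (thetaClose φ θs).not)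
    (θstar : L.Formula Unit) (hθstar : θstar ∈ Θ) {m : ℕ}
    {ψ : L.BoundedFormula Empty m} (h : ψ.IsPrenex) :
    ∀ θs : Fin m → L.Formula Unit, (∀ i, θs i ∈ Θ) →
      ThetaProv L Θ T (thetaClose (flat ψ) θs) ∨
        ThetaProv L Θ T (thetaClose (flat ψ).not θs) := by
  refine BoundedFormula.IsPrenex.induction_on_all_not
    (P := fun {n} χ => ∀ θs : Fin n → L.Formula Unit, (∀ i, θs i ∈ Θ) →
      ThetaProv L Θ T (thetaClose (flat χ) θs) ∨
        ThetaProv L Θ T (thetaClose (flat χ).not θs)) h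
    (fun {n} {χ} hq => qf_decide hΘ hdec θstar hθstar hq) ?_ ?_
  · -- `all` case
    intro k χ ih θs hθs
    by_cases hall : ∀ θ ∈ Θ, ThetaProv L Θ T (thetaClose (flat χ) (Fin.snoc θs θ))
    · left
      have hstep1 : ∀ θ ∈ Θ, ThetaProv L Θ T (exClose (phi0 χ θs ⊓ θ)) := by
        intro θ hθ
        apply prv_of_sem
        intro M _ _ hM
        have h1 := sem_of_prv (hall θ hθ) M hM
        rw [realize_thetaClose] at h1
        obtain ⟨xs, hφ, hcond⟩ := h1
        rw [realize_flat] at hφ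
        rw [realize_exClose]
        refine ⟨xs (Fin.last k), ?_⟩
        rw [Formula.realize_inf]
        constructor
        · rw [realize_phi0]
          refine ⟨Fin.init xs, ?_, ?_⟩
          · rw [Fin.snoc_init_self]; exact hφ
          · intro j
            have hc := hcond j.castSucc
            rwa [Fin.snoc_castSucc] at hc
        · have hc := hcond (Fin.last k)
          rwa [Fin.snoc_last] at hc
      have hstep2 := ThetaProv.rule (phi0 χ θs) hstep1
      apply prv_of_sem
      intro M _ _ hM
      haveI : M ⊨ T := model_T M hM
      obtain ⟨w, hw, hu⟩ := exists_wits hΘ M hθs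
      have hA := sem_of_prv hstep2 M hM
      rw [realize_allClose] at hA
      rw [realize_thetaClose_of_unique hw hu, realize_flat, BoundedFormula.realize_all]
      intro b
      obtain ⟨xs, hx, hxs⟩ := (realize_phi0 b).1 (hA b)
      have hxw : xs = w := funext fun j => hu j _ (hxs j)
      rwa [hxw] at hx
    · push_neg at hall
      obtain ⟨θ, hθ, hnp⟩ := hall
      have hmem : ∀ i, (Fin.snoc θs θ : Fin (k+1) → L.Formula Unit) i ∈ Θ := by
        intro i
        refine Fin.lastCases ?_ ?_ i
        · rw [Fin.snoc_last]; exact hθ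
        · intro j; rw [Fin.snoc_castSucc]; exact hθs j
      rcases ih (Fin.snoc θs θ) hmem with hp | hn
      · exact absurd hp hnp
      · right
        apply prv_of_sem
        intro M _ _ hM
        haveI : M ⊨ T := model_T M hM
        obtain ⟨w, hw, hu⟩ := exists_wits hΘ M hθs
        have h1 := sem_of_prv hn M hM
        rw [realize_thetaClose] at h1
        obtain ⟨xs, hφ, hcond⟩ := h1
        rw [Formula.realize_not, realize_flat] at hφ
        have hxw : ∀ j : Fin k, xs j.castSucc = w j := by
          intro j
          have hc := hcond j.castSucc
          rw [Fin.snoc_castSucc] at hc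
          exact hu j _ hc
        rw [realize_thetaClose_of_unique hw hu, Formula.realize_not, realize_flat,
          BoundedFormula.realize_all]
        intro hc
        apply hφ
        have hb := hc (xs (Fin.last k))
        have hsw : Fin.snoc w (xs (Fin.last k)) = xs := by
          funext t
          refine Fin.lastCases ?_ ?_ t
          · rw [Fin.snoc_last]
          · intro j; rw [Fin.snoc_castSucc, hxw j]
        rwa [hsw] at hb
  · -- `not` case
    intro k χ ih θs hθs
    rcases ih θs hθs with hp | hn
    · right
      apply prv_of_sem
      intro M _ _ hM
      haveI : M ⊨ T := model_T M hM
      obtain ⟨w, hw, hu⟩ := exists_wits hΘ M hθs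
      have h1 := sem_of_prv hp M hM
      rw [realize_thetaClose_of_unique hw hu, realize_flat] at h1
      rw [realize_thetaClose_of_unique hw hu, Formula.realize_not, realize_flat,
        BoundedFormula.realize_not]
      exact fun hc => hc h1
    · left
      apply prv_of_sem
      intro M _ _ hM
      haveI : M ⊨ T := model_T M hM
      obtain ⟨w, hw, hu⟩ := exists_wits hΘ M hθs
      have h1 := sem_of_prv hn M hM
      rw [realize_thetaClose_of_unique hw hu, Formula.realize_not, realize_flat] at h1
      rw [realize_thetaClose_of_unique hw hu, realize_flat, BoundedFormula.realize_not]
      exact h1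

end StmtAux
/-- Syntactic completeness, general form: if T decides all Θ-atomic sentences,
then [T, ⊢_Θ] is complete. -/
theorem stmt_10 {L : FirstOrder.Language.{u, v}} (T : L.Theory) (Θ : Set (L.Formula Unit))
    (hΘ : ∀ θ ∈ Θ, IsUniquenessFormula T θ)
    (hdec : ∀ (n : ℕ) (φ : L.Formula (Fin (n + 1))), φ.IsAtomic →
      ∀ θs : Fin (n + 1) → L.Formula Unit, (∀ i, θs i ∈ Θ) →
        T ⊨ᵇ thetaClose φ θs ∨ T ⊨ᵇ (thetaClose φ θs).not) :
    ∀ σ : L.Sentence, ThetaProv L Θ T σ ∨ ThetaProv L Θ T σ.not := by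
  intro σ
  rcases Set.eq_empty_or_nonempty Θ with hΘe | ⟨θstar, hθstar⟩
  · -- `Θ` is empty: the Θ-rule yields `∀x ⊥`, so everything is provable.
    left
    have hall : ThetaProv L Θ T (allClose (⊥ : L.Formula Unit)) :=
      ThetaProv.rule ⊥ (fun θ hθ =>
        absurd (hΘe ▸ hθ : θ ∈ (∅ : Set (L.Formula Unit))) (Set.notMem_empty θ))
    apply StmtAux.prv_of_sem
    intro M _ _ hM
    have h1 := StmtAux.sem_of_prv hall M hM
    rw [StmtAux.realize_allClose] at h1
    exact (h1 (Classical.arbitrary M) : False).elim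
  · rcases StmtAux.prenex_decide hΘ hdec θstar hθstar σ.toPrenex_isPrenex
      (fun i => i.elim0) (fun i => i.elim0) with h | h
    · left
      apply StmtAux.prv_of_sem
      intro M _ _ hM
      have h1 := StmtAux.sem_of_prv h M hM
      rw [StmtAux.realize_thetaClose] at h1
      obtain ⟨xs, hφ, -⟩ := h1
      rw [StmtAux.realize_flat, BoundedFormula.realize_toPrenex] at hφ
      have h2 : (fun e : Empty => e.elim) = (default : Empty → M) := funext fun e => e.elim
      have h3 : xs = (default : Fin 0 → M) := funext fun i => i.elim0
      rw [h2, h3] at hφ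
      exact hφ
    · right
      apply StmtAux.prv_of_sem
      intro M _ _ hM
      have h1 := StmtAux.sem_of_prv h M hM
      rw [StmtAux.realize_thetaClose] at h1
      obtain ⟨xs, hφ, -⟩ := h1
      rw [Formula.realize_not, StmtAux.realize_flat, BoundedFormula.realize_toPrenex] at hφ
      have h2 : (fun e : Empty => e.elim) = (default : Empty → M) := funext fun e => e.elim
      have h3 : xs = (default : Fin 0 → M) := funext fun i => i.elim0
      rw [h2, h3] at hφ
      rw [Sentence.realize_not]
      exact hφ
end
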